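/- Let {f_j : j ∈ J} be a Parseval frame for an N-dimensional Hilbert space, let E ⊆ J, let S = span{f_j : j ∉ E}, and let P be the orthogonal projection onto S^⊥. Then dim S^⊥ = ∑_{j∈E} ‖P f_j‖². In particular, if ‖f_j‖² ≤ 1 − δ for all j, then dim S^⊥ ≤ |E|(1 − δ). -/

import Mathlib

open scoped InnerProductSpace

lemma my_norm_sq_eq_sum {F : Type*} [NormedAddCommGroup F] [InnerProductSpace ℂ F]
    {n : ℕ} (b : OrthonormalBasis (Fin n) ℂ F) (v : F) :
    ‖v‖ ^ 2 = ∑ i, ‖⟪b i, v⟫_ℂ‖ ^ 2 := by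
  have h : ‖v‖ = ‖b.repr v‖ := (b.repr.norm_map v).symm
  rw [h, EuclideanSpace.norm_eq, Real.sq_sqrt (by positivity)]
  simp [b.repr_apply_apply]

/-- For a Parseval frame `{f j : j ∈ J}` of a finite-dimensional Hilbert
space, `E ⊆ J`, `S = span{f j : j ∉ E}` and `P` the orthogonal projection onto `Sᗮ`,
we have `dim Sᗮ = ∑_{j ∈ E} ‖P f j‖²`; in particular if `‖f j‖² ≤ 1 - δ` for all `j`
then `dim Sᗮ ≤ |E| (1 - δ)`. -/
theorem finrank_orthogonal_complement_eq_sum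
    {H : Type*} [NormedAddCommGroup H] [InnerProductSpace ℂ H] [FiniteDimensional ℂ H]
    {J : Type*} [Fintype J] (f : J → H)
    (hParseval : ∀ x : H, ∑ j : J, ‖⟪x, f j⟫_ℂ‖ ^ 2 = ‖x‖ ^ 2)
    (E : Finset J) (S : Submodule ℂ H)
    (hS : S = Submodule.span ℂ (f '' (↑E : Set J)ᶜ)) (δ : ℝ) :
    (Module.finrank ℂ Sᗮ : ℝ) = ∑ j ∈ E, ‖((Sᗮ).orthogonalProjectionOnto (f j) : H)‖ ^ 2 ∧
    ((∀ j : J, ‖f j‖ ^ 2 ≤ 1 - δ) →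
      (Module.finrank ℂ Sᗮ : ℝ) ≤ (E.card : ℝ) * (1 - δ)) := by
  set P := (Sᗮ).orthogonalProjectionOnto with hP
  -- projection of f j vanishes off E
  have h0 : ∀ j ∉ E, (P (f j) : H) = 0 := by
    intro j hj
    have hmem : f j ∈ S := by
      rw [hS]
      exact Submodule.subset_span ⟨j, by simpa using hj, rfl⟩
    have : f j ∈ Sᗮᗮ := Submodule.le_orthogonal_orthogonal S hmem
    rw [hP, Submodule.orthogonalProjectionOnto_apply_of_mem_orthogonal this,
      ZeroMemClass.coe_zero]
  set b := stdOrthonormalBasis ℂ ↥Sᗮ with hb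
  have key : ∀ j, ‖(P (f j) : H)‖ ^ 2 = ∑ i, ‖⟪((b i : ↥Sᗮ) : H), f j⟫_ℂ‖ ^ 2 := by
    intro j
    have h1 : ‖(P (f j) : H)‖ = ‖P (f j)‖ := rfl
    rw [h1, my_norm_sq_eq_sum b (P (f j))]
    congr 1
    ext i
    congr 1
    exact congrArg norm (Submodule.inner_orthogonalProjectionOnto_eq_of_mem_left (u := b i) (v := f j))
  have hnormb : ∀ i, ‖((b i : ↥Sᗮ) : H)‖ = 1 := by
    intro i
    have := b.orthonormal.1 i
    rwa [Submodule.norm_coe]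
  have main : (Module.finrank ℂ ↥Sᗮ : ℝ) = ∑ j : J, ‖(P (f j) : H)‖ ^ 2 := by
    calc (Module.finrank ℂ ↥Sᗮ : ℝ)
        = ∑ _i : Fin (Module.finrank ℂ ↥Sᗮ), (1 : ℝ) := by simp
      _ = ∑ i : Fin (Module.finrank ℂ ↥Sᗮ), ∑ j : J, ‖⟪((b i : ↥Sᗮ) : H), f j⟫_ℂ‖ ^ 2 := by
          refine Finset.sum_congr rfl fun i _ => ?_
          rw [hParseval ((b i : ↥Sᗮ) : H), hnormb i, one_pow]
      _ = ∑ j : J, ∑ i, ‖⟪((b i : ↥Sᗮ) : H), f j⟫_ℂ‖ ^ 2 := Finset.sum_comm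
      _ = ∑ j : J, ‖(P (f j) : H)‖ ^ 2 := by
          refine Finset.sum_congr rfl fun j _ => (key j).symm
  have hsum : ∑ j : J, ‖(P (f j) : H)‖ ^ 2 = ∑ j ∈ E, ‖(P (f j) : H)‖ ^ 2 := by
    refine (Finset.sum_subset E.subset_univ fun j _ hj => ?_).symm
    rw [h0 j hj, norm_zero]; ring
  have heq : (Module.finrank ℂ ↥Sᗮ : ℝ) = ∑ j ∈ E, ‖(P (f j) : H)‖ ^ 2 :=
    main.trans hsum
  refine ⟨heq, fun hδ => ?_⟩
  rw [heq]
  have hle : ∀ j, ‖(P (f j) : H)‖ ^ 2 ≤ 1 - δ := by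
    intro j
    have h1 : ‖(P (f j) : H)‖ ≤ ‖f j‖ := by
      have := (P : H →L[ℂ] ↥Sᗮ).le_opNorm (f j)
      have h2 : ‖P‖ ≤ 1 := Submodule.orthogonalProjectionOnto_norm_le Sᗮ
      calc ‖(P (f j) : H)‖ = ‖P (f j)‖ := rfl
        _ ≤ ‖P‖ * ‖f j‖ := this
        _ ≤ 1 * ‖f j‖ := by
            apply mul_le_mul_of_nonneg_right h2 (norm_nonneg _)
        _ = ‖f j‖ := one_mul _
    calc ‖(P (f j) : H)‖ ^ 2 ≤ ‖f j‖ ^ 2 :=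
          pow_le_pow_left₀ (norm_nonneg _) h1 2
      _ ≤ 1 - δ := hδ j
  calc ∑ j ∈ E, ‖(P (f j) : H)‖ ^ 2 ≤ ∑ _j ∈ E, (1 - δ) :=
        Finset.sum_le_sum fun j _ => hle j
    _ = (E.card : ℝ) * (1 - δ) := by rw [Finset.sum_const, nsmul_eq_mul]
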